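/- Let C ≥ 1 be a constant. There exists n₀ such that for all n ≥ n₀ the following holds. Let F be a graph on n vertices with at most Cn edges, let G ∼ G(n,1/2) be a uniformly random labelled graph on n vertices, and let π : V(F) → V(G) be any fixed bijection. Then with probability at least 1 − e^{−n log n}, there exist distinct vertices x, y ∈ V(G) such that {x, y} is a π-switch. -/

import Mathlib

open SimpleGraph Finset

set_option linter.unusedSectionVars false
set_option maxHeartbeats 1000000

/-- Given a bijection `π : V(F) → V(G)`, a pair of distinct vertices `{x, y}` of `G` is a
`π`-switch if `N_G(y) ⊇ π(N_F(π⁻¹x) \ N_F(π⁻¹y))` and `N_G(x) ⊇ π(N_F(π⁻¹y) \ N_F(π⁻¹x))`. -/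
def IsSwitch {α β : Type*} (F : SimpleGraph α) (G : SimpleGraph β) (π : α ≃ β)
    (x y : β) : Prop :=
  x ≠ y ∧
    (⇑π '' (F.neighborSet (π.symm x) \ F.neighborSet (π.symm y)) ⊆ G.neighborSet y) ∧
    (⇑π '' (F.neighborSet (π.symm y) \ F.neighborSet (π.symm x)) ⊆ G.neighborSet x)

section Counting

variable {β : Type*} [Fintype β] [DecidableEq β]

/-- Override `h` on coordinates in `A` by `f`. -/
private def ovr (A : Finset β) (h : β → Bool) (f : A → Bool) : β → Bool :=
  fun e => if he : e ∈ A then f ⟨e, he⟩ else h e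

private lemma ovr_agree (A : Finset β) (h : β → Bool) (f : A → Bool) :
    ∀ e, e ∉ A → ovr A h f e = h e := by
  intro e he; simp [ovr, he]

lemma card_step (A : Finset β) (P : (β → Bool) → Prop)
    (hP : ∀ h h' : β → Bool, (∀ e, e ∉ A → h e = h' e) → (P h ↔ P h')) :
    Nat.card {h : β → Bool // (∃ e ∈ A, h e = false) ∧ P h} * 2 ^ A.card
      = Nat.card {h : β → Bool // P h} * (2 ^ A.card - 1) := by
  classical
  have hcongr : ∀ (h : β → Bool) (f : A → Bool), P (ovr A h f) ↔ P h := by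
    intro h f
    exact hP _ _ (fun e he => ovr_agree A h f e he)
  have E : ({h : β → Bool // (∃ e ∈ A, h e = false) ∧ P h} × (A → Bool)) ≃
      ({h : β → Bool // P h} × {f : A → Bool // ∃ e : A, f e = false}) :=
  { toFun := fun p =>
      ⟨⟨ovr A p.1.1 p.2, (hcongr _ _).2 p.1.2.2⟩,
        ⟨fun e => p.1.1 e, by
          obtain ⟨e, he, hfe⟩ := p.1.2.1
          exact ⟨⟨e, he⟩, hfe⟩⟩⟩
    invFun := fun p =>
      ⟨⟨ovr A p.1.1 p.2.1, by
          constructor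
          · obtain ⟨e, hfe⟩ := p.2.2
            exact ⟨e.1, e.2, by simp [ovr, e.2, hfe]⟩
          · exact (hcongr _ _).2 p.1.2⟩,
        fun e => p.1.1 e⟩
    left_inv := by
      rintro ⟨⟨h, hh⟩, f⟩
      ext e
      · show ovr A (ovr A h f) (fun e => h e) e = h e
        by_cases he : e ∈ A <;> simp [ovr, he]
      · show ovr A h f e.1 = f e
        simp [ovr, e.2]
    right_inv := by
      rintro ⟨⟨h, hh⟩, ⟨g, hg⟩⟩
      ext e
      · show ovr A (ovr A h g) (fun e => h e) e = h e
        by_cases he : e ∈ A <;> simp [ovr, he]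
      · show ovr A h g e.1 = g e
        simp [ovr, e.2]  }
  have hcards := Nat.card_congr E
  rw [Nat.card_prod, Nat.card_prod] at hcards
  have c3 : Nat.card (A → Bool) = 2 ^ A.card := by
    simp [Nat.card_eq_fintype_card]
  have c4 : Nat.card {f : A → Bool // ∃ e : A, f e = false} = 2 ^ A.card - 1 := by
    rw [Nat.card_eq_fintype_card]
    have h1 : Fintype.card {f : A → Bool // ¬ ∃ e : A, f e = false} = 1 := by
      rw [Fintype.card_eq_one_iff]
      refine ⟨⟨fun _ => true, by simp⟩, ?_⟩
      rintro ⟨f, hf⟩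
      push_neg at hf
      ext e
      simpa using hf e
    have h2 := Fintype.card_subtype_compl (fun f : A → Bool => ∃ e : A, f e = false)
    have h3 : Fintype.card {f : A → Bool // ∃ e : A, f e = false}
        ≤ Fintype.card (A → Bool) := Fintype.card_subtype_le _
    have h5 : Fintype.card (A → Bool) = 2 ^ A.card := by simp
    rw [h1, h5] at h2
    rw [h5] at h3
    clear E hcards hcongr hP h1 P
    revert h2 h3
    generalize hgen : Fintype.card {f : A → Bool // ∃ e : A, f e = false} = c
    generalize hgen2 : (2 : ℕ) ^ A.card = T
    intro h2 h3
    clear hgen hgen2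
    omega
  rw [c3, c4] at hcards
  exact hcards

lemma card_bad_le {ι : Type*} (I : Finset ι) (S : ι → Finset β)
    (hdisj : (I : Set ι).Pairwise fun i j => Disjoint (S i) (S j)) :
    (Nat.card {h : β → Bool // ∀ i ∈ I, ∃ e ∈ S i, h e = false} : ℝ)
      ≤ 2 ^ (Fintype.card β) * ∏ i ∈ I, (1 - ((2:ℝ)⁻¹) ^ (S i).card) := by
  classical
  induction I using Finset.induction_on with
  | empty =>
      have : Nat.card {h : β → Bool // ∀ i ∈ (∅ : Finset ι), ∃ e ∈ S i, h e = false}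
          = 2 ^ Fintype.card β := by
        rw [Nat.card_congr (Equiv.subtypeUnivEquiv (by simp))]
        simp [Nat.card_eq_fintype_card]
      rw [this]
      simp
  | insert a I' ha ih =>
      have hd' : ((I' : Set ι)).Pairwise fun i j => Disjoint (S i) (S j) :=
        hdisj.mono (by simp [Finset.coe_insert, Set.subset_insert])
      have step := card_step (A := S a)
        (P := fun h : β → Bool => ∀ i ∈ I', ∃ e ∈ S i, h e = false) ?_
      · have hiff : ∀ h : β → Bool,
            (∀ i ∈ insert a I', ∃ e ∈ S i, h e = false) ↔
            ((∃ e ∈ S a, h e = false) ∧ ∀ i ∈ I', ∃ e ∈ S i, h e = false) := by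
          intro h; rw [Finset.forall_mem_insert]
        have hcongr : Nat.card {h : β → Bool // ∀ i ∈ insert a I', ∃ e ∈ S i, h e = false}
            = Nat.card {h : β → Bool // (∃ e ∈ S a, h e = false) ∧
                ∀ i ∈ I', ∃ e ∈ S i, h e = false} :=
          Nat.card_congr (Equiv.subtypeEquivRight hiff)
        rw [hcongr]
        have hpos : (0:ℝ) < 2 ^ (S a).card := by positivity
        rw [Finset.prod_insert ha]
        have hc : ((2 ^ (S a).card - 1 : ℕ) : ℝ)
            = (2:ℝ) ^ (S a).card * (1 - (2:ℝ)⁻¹ ^ (S a).card) := by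
          rw [Nat.cast_sub Nat.one_le_two_pow]
          push_cast
          rw [mul_sub, mul_one, ← mul_pow]
          norm_num
        have h01 : (0:ℝ) ≤ 1 - (2:ℝ)⁻¹ ^ (S a).card := by
          have : ((2:ℝ)⁻¹) ^ (S a).card ≤ 1 :=
            pow_le_one₀ (by norm_num) (by norm_num)
          linarith
        have key : (Nat.card {h : β → Bool // (∃ e ∈ S a, h e = false) ∧
                ∀ i ∈ I', ∃ e ∈ S i, h e = false} : ℝ)
            = (Nat.card {h : β → Bool // ∀ i ∈ I', ∃ e ∈ S i, h e = false} : ℝ)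
              * (1 - (2:ℝ)⁻¹ ^ (S a).card) := by
          have h := congrArg (fun k : ℕ => (k : ℝ)) step
          simp only [Nat.cast_mul, Nat.cast_pow, Nat.cast_ofNat, hc] at h
          refine mul_right_cancel₀ (ne_of_gt hpos) ?_
          rw [h]; ring
        calc (Nat.card {h : β → Bool // (∃ e ∈ S a, h e = false) ∧
                ∀ i ∈ I', ∃ e ∈ S i, h e = false} : ℝ)
            = (Nat.card {h : β → Bool // ∀ i ∈ I', ∃ e ∈ S i, h e = false} : ℝ)
              * (1 - (2:ℝ)⁻¹ ^ (S a).card) := key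
          _ ≤ (2 ^ (Fintype.card β) * ∏ i ∈ I', (1 - ((2:ℝ)⁻¹) ^ (S i).card))
              * (1 - (2:ℝ)⁻¹ ^ (S a).card) :=
                mul_le_mul_of_nonneg_right (ih hd') h01
          _ = 2 ^ (Fintype.card β) * ((1 - (2:ℝ)⁻¹ ^ (S a).card)
              * ∏ i ∈ I', (1 - ((2:ℝ)⁻¹) ^ (S i).card)) := by ring
      · intro h h' hagree
        apply forall₂_congr
        intro i hi
        have hdis : Disjoint (S a) (S i) :=
          hdisj (by simp) (by simp [hi]) (by rintro rfl; exact ha hi)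
        apply exists_congr; intro e
        apply and_congr_right; intro he
        rw [hagree e (Finset.disjoint_right.1 hdis he)]

end Counting

section GraphCount

variable {n : ℕ}

abbrev ESlot (n : ℕ) := {e : Sym2 (Fin n) // ¬ e.IsDiag}

noncomputable def graphToFun (G : SimpleGraph (Fin n)) : ESlot n → Bool :=
  fun e => @decide (e.1 ∈ G.edgeSet) (Classical.propDecidable _)

lemma graphToFun_true_iff (G : SimpleGraph (Fin n)) (e : ESlot n) :
    graphToFun G e = true ↔ e.1 ∈ G.edgeSet := by
  simp [graphToFun]

noncomputable def graphEquiv (n : ℕ) : SimpleGraph (Fin n) ≃ (ESlot n → Bool) where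
  toFun := graphToFun
  invFun h := SimpleGraph.fromEdgeSet {e | ∃ he : ¬ e.IsDiag, h ⟨e, he⟩ = true}
  left_inv := by
    intro G
    ext a b
    have hd : ∀ (hab : a ≠ b), ¬ (s(a, b) : Sym2 (Fin n)).IsDiag := by
      intro hab
      simp [Sym2.isDiag_iff_proj_eq, hab]
    simp only [fromEdgeSet_adj, Set.mem_setOf_eq]
    constructor
    · rintro ⟨⟨he, htrue⟩, hne⟩
      rw [graphToFun_true_iff] at htrue
      exact htrue
    · intro hadj
      refine ⟨⟨hd hadj.ne, ?_⟩, hadj.ne⟩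
      rw [graphToFun_true_iff]
      exact hadj
  right_inv := by
    intro h
    funext e
    obtain ⟨e, he⟩ := e
    have : (graphToFun (fromEdgeSet {e | ∃ he : ¬ e.IsDiag, h ⟨e, he⟩ = true}) ⟨e, he⟩ = true)
        ↔ (h ⟨e, he⟩ = true) := by
      rw [graphToFun_true_iff]
      simp only [edgeSet_fromEdgeSet, Set.mem_diff, Set.mem_setOf_eq]
      constructor
      · rintro ⟨⟨_, ht⟩, _⟩; exact ht
      · intro ht; exact ⟨⟨he, ht⟩, he⟩
    rcases Bool.dichotomy (h ⟨e, he⟩) with hb | hb <;>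
      rcases Bool.dichotomy (graphToFun (fromEdgeSet {e | ∃ he : ¬ e.IsDiag, h ⟨e, he⟩ = true})
        ⟨e, he⟩) with hb' | hb' <;> simp_all

lemma card_simpleGraph_eq (n : ℕ) :
    Nat.card (SimpleGraph (Fin n)) = 2 ^ (n.choose 2) := by
  rw [Nat.card_congr (graphEquiv n), Nat.card_eq_fintype_card]
  rw [Fintype.card_fun]
  congr 1
  rw [Sym2.card_subtype_not_diag, Fintype.card_fin]

lemma card_eslot (n : ℕ) : Fintype.card (ESlot n) = n.choose 2 := by
  rw [Sym2.card_subtype_not_diag, Fintype.card_fin]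

end GraphCount

section Greedy

lemma indep_subset {V : Type*} [DecidableEq V] (nb : V → Finset V) (s : ℕ)
    (hsymm : ∀ x y, y ∈ nb x → x ∈ nb y) :
    ∀ A : Finset V, (∀ v ∈ A, (nb v).card ≤ s) →
    ∃ B ⊆ A, A.card ≤ (s + 1) * B.card ∧ ∀ u ∈ B, ∀ v ∈ B, u ≠ v → v ∉ nb u := by
  intro A
  induction A using Finset.strongInduction with
  | _ A ih =>
    intro hcard
    rcases A.eq_empty_or_nonempty with rfl | ⟨v, hv⟩
    · exact ⟨∅, by simp⟩
    · set A' := A \ insert v (nb v) with hA'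
      have hsub : A' ⊂ A := by
        refine Finset.ssubset_iff_of_subset (Finset.sdiff_subset) |>.2 ⟨v, hv, ?_⟩
        simp [hA']
      obtain ⟨B', hB'sub, hB'card, hB'ind⟩ := ih A' hsub
        (fun w hw => hcard w (Finset.mem_sdiff.1 hw).1)
      have hvB' : v ∉ B' := fun h => by
        have := hB'sub h
        rw [hA', Finset.mem_sdiff] at this
        exact this.2 (by simp)
      refine ⟨insert v B', ?_, ?_, ?_⟩
      · intro w hw
        rcases Finset.mem_insert.1 hw with rfl | hw
        · exact hv
        · exact Finset.sdiff_subset (hB'sub hw)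
      · have h1 : A.card ≤ A'.card + (s + 1) := by
          have : (insert v (nb v)).card ≤ s + 1 := by
            calc (insert v (nb v)).card ≤ (nb v).card + 1 := Finset.card_insert_le _ _
            _ ≤ s + 1 := by have := hcard v hv; omega
          have hsub2 : A ⊆ A' ∪ insert v (nb v) := by
            intro x hx
            rw [Finset.mem_union, hA', Finset.mem_sdiff]
            by_cases hxx : x ∈ insert v (nb v)
            · exact Or.inr hxx
            · exact Or.inl ⟨hx, hxx⟩
          have h2 : A.card ≤ A'.card + (insert v (nb v)).card :=
            (Finset.card_le_card hsub2).trans (Finset.card_union_le _ _)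
          omega
        rw [Finset.card_insert_of_notMem hvB']
        calc A.card ≤ A'.card + (s+1) := h1
          _ ≤ (s+1) * B'.card + (s+1) := by omega
          _ = (s+1) * (B'.card + 1) := by ring
      · intro u hu w hw huw
        rcases Finset.mem_insert.1 hu with h1 | h1 <;> rcases Finset.mem_insert.1 hw with h2 | h2
        · exact absurd (h1.trans h2.symm) huw
        · subst h1
          have := hB'sub h2
          rw [hA', Finset.mem_sdiff] at this
          intro hmem
          exact this.2 (Finset.mem_insert_of_mem hmem)
        · subst h2
          have hu' := hB'sub h1
          rw [hA', Finset.mem_sdiff] at hu'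
          intro hmem
          exact hu'.2 (Finset.mem_insert_of_mem (hsymm _ _ hmem))
        · exact hB'ind u h1 w h2 huw

end Greedy

section Sunflower

lemma sunflower_exists {V W : Type*} [DecidableEq V] [DecidableEq W] :
    ∀ (s m : ℕ) (A : Finset V) (f : V → Finset W),
      (∀ v ∈ A, (f v).card ≤ s) → (s+1).factorial * m ^ (s+1) ≤ A.card →
      ∃ T ⊆ A, T.card = m ∧ ∃ Y : Finset W, (∀ v ∈ T, Y ⊆ f v) ∧
        ∀ u ∈ T, ∀ v ∈ T, u ≠ v → Disjoint (f u \ Y) (f v \ Y) := by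
  intro s
  induction s with
  | zero =>
    intro m A f hc hA
    norm_num at hA
    obtain ⟨T, hTA, hTcard⟩ := Finset.exists_subset_card_eq hA
    refine ⟨T, hTA, hTcard, ∅, fun v _ => Finset.empty_subset _, ?_⟩
    intro u hu v hv huv
    have : f u = ∅ := Finset.card_eq_zero.1 (Nat.le_zero.1 (hc u (hTA hu)))
    simp [this]
  | succ s ihs =>
    intro m A f hc hA
    rcases Nat.eq_zero_or_pos m with rfl | hm
    · exact ⟨∅, Finset.empty_subset _, Finset.card_empty, ∅, by simp, by simp⟩
    classical
    set t := (s+1).factorial * m ^ (s+1) with ht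
    have htpos : 1 ≤ t := by
      apply Nat.one_le_iff_ne_zero.2
      positivity
    -- maximal pairwise disjoint subfamily
    set 𝒞 := A.powerset.filter
      (fun T => ∀ u ∈ T, ∀ v ∈ T, u ≠ v → Disjoint (f u) (f v)) with h𝒞
    have hemp : (∅ : Finset V) ∈ 𝒞 := by simp [h𝒞]
    obtain ⟨T₀, hT₀mem, hT₀max⟩ := Finset.exists_max_image 𝒞 Finset.card ⟨∅, hemp⟩
    simp only [h𝒞, Finset.mem_filter, Finset.mem_powerset] at hT₀mem
    obtain ⟨hT₀A, hT₀disj⟩ := hT₀mem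
    by_cases hbig : m ≤ T₀.card
    · obtain ⟨T, hTT₀, hTcard⟩ := Finset.exists_subset_card_eq hbig
      refine ⟨T, hTT₀.trans hT₀A, hTcard, ∅, fun v _ => Finset.empty_subset _, ?_⟩
      intro u hu v hv huv
      simpa using hT₀disj u (hTT₀ hu) v (hTT₀ hv) huv
    push_neg at hbig
    set U := T₀.biUnion f with hU
    have hUcard : U.card ≤ (s+1) * (m-1) := by
      calc U.card ≤ ∑ v ∈ T₀, (f v).card := Finset.card_biUnion_le
        _ ≤ T₀.card * (s+1) := Finset.sum_le_card_nsmul _ _ _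
              (fun v hv => hc v (hT₀A hv))
        _ ≤ (m-1) * (s+1) := by
              apply Nat.mul_le_mul_right
              omega
        _ = (s+1) * (m-1) := Nat.mul_comm _ _
    -- every set outside T₀ hits U
    have hhit : ∀ v ∈ A, v ∉ T₀ → (f v ∩ U).Nonempty := by
      intro v hvA hvT₀
      rw [Finset.nonempty_iff_ne_empty]
      intro hempty
      have hdisjU : ∀ w ∈ T₀, Disjoint (f v) (f w) := by
        intro w hw
        rw [Finset.disjoint_left]
        intro a hav haw
        have : a ∈ f v ∩ U := Finset.mem_inter.2 ⟨hav, Finset.mem_biUnion.2 ⟨w, hw, haw⟩⟩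
        simp [hempty] at this
      have hmem : insert v T₀ ∈ 𝒞 := by
        simp only [h𝒞, Finset.mem_filter, Finset.mem_powerset]
        refine ⟨Finset.insert_subset hvA hT₀A, ?_⟩
        intro u hu w hw huw
        rcases Finset.mem_insert.1 hu with h1 | h1 <;> rcases Finset.mem_insert.1 hw with h2 | h2
        · exact absurd (h1.trans h2.symm) huw
        · subst h1; exact hdisjU w h2
        · subst h2; exact (hdisjU u h1).symm
        · exact hT₀disj u h1 w h2 huw
      have := hT₀max _ hmem
      rw [Finset.card_insert_of_notMem hvT₀] at this
      omega
    -- double counting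
    have hsum1 : A.card - (m-1) ≤ ∑ v ∈ A, (f v ∩ U).card := by
      have h1 : (A \ T₀).card ≤ ∑ v ∈ A \ T₀, (f v ∩ U).card := by
        refine Finset.card_nsmul_le_sum (A \ T₀) _ 1 ?_ |>.trans_eq' (by simp)
        intro v hv
        rw [Finset.mem_sdiff] at hv
        exact Finset.Nonempty.card_pos (hhit v hv.1 hv.2)
      have h2 : ∑ v ∈ A \ T₀, (f v ∩ U).card ≤ ∑ v ∈ A, (f v ∩ U).card :=
        Finset.sum_le_sum_of_subset (Finset.sdiff_subset)
      have h3 : A.card - (m-1) ≤ (A \ T₀).card := by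
        rw [Finset.card_sdiff_of_subset hT₀A]
        omega
      omega
    have hswap : ∑ v ∈ A, (f v ∩ U).card = ∑ z ∈ U, (A.filter (fun v => z ∈ f v)).card := by
      have h1 : ∀ v, f v ∩ U = U.filter (fun z => z ∈ f v) := by
        intro v
        ext a
        simp [Finset.mem_inter, Finset.mem_filter, and_comm]
      calc ∑ v ∈ A, (f v ∩ U).card = ∑ v ∈ A, ∑ z ∈ U, if z ∈ f v then 1 else 0 := by
            refine Finset.sum_congr rfl fun v _ => ?_
            rw [h1 v, Finset.card_filter]
        _ = ∑ z ∈ U, ∑ v ∈ A, if z ∈ f v then 1 else 0 := Finset.sum_comm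
        _ = ∑ z ∈ U, (A.filter (fun v => z ∈ f v)).card := by
            refine Finset.sum_congr rfl fun z _ => ?_
            rw [Finset.card_filter]
    -- pigeonhole
    have hpigeon : ∃ z ∈ U, t ≤ (A.filter (fun v => z ∈ f v)).card := by
      by_contra hcon
      push_neg at hcon
      have hb : ∑ z ∈ U, (A.filter (fun v => z ∈ f v)).card ≤ U.card * (t-1) :=
        Finset.sum_le_card_nsmul _ _ _ (fun z hz => by have := hcon z hz; omega)
      have hchain : A.card - (m-1) ≤ (s+1) * (m-1) * (t-1) := by
        calc A.card - (m-1) ≤ ∑ v ∈ A, (f v ∩ U).card := hsum1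
          _ = ∑ z ∈ U, (A.filter (fun v => z ∈ f v)).card := hswap
          _ ≤ U.card * (t-1) := hb
          _ ≤ ((s+1) * (m-1)) * (t-1) := Nat.mul_le_mul_right _ hUcard
      -- contradiction with hA : (s+2)! * m^(s+2) ≤ A.card
      have hfac : (s+1+1).factorial * m ^ (s+1+1) = (s+2) * t * m := by
        rw [ht, Nat.factorial_succ, pow_succ]
        ring
      rw [hfac] at hA
      have hchain2 : A.card ≤ (s+1) * (m-1) * (t-1) + (m-1) := by
        revert hchain
        generalize ((s+1) * (m-1) * (t-1)) = X
        omega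
      have hcomb : (s+2) * t * m ≤ (s+1) * (m-1) * (t-1) + (m-1) := hA.trans hchain2
      obtain ⟨p, hp⟩ : ∃ p, m = p + 1 := ⟨m-1, by omega⟩
      obtain ⟨q, hq⟩ : ∃ q, t = q + 1 := ⟨t-1, by omega⟩
      rw [hp, hq] at hcomb
      simp only [Nat.add_sub_cancel] at hcomb
      nlinarith [hcomb]
    obtain ⟨z, hzU, hzcnt⟩ := hpigeon
    set B := A.filter (fun v => z ∈ f v) with hB
    have hIH := ihs m B (fun v => (f v).erase z) ?_ hzcnt
    · obtain ⟨T, hTB, hTcard, Y', hY'sub, hY'disj⟩ := hIH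
      have hTA : T ⊆ A := hTB.trans (Finset.filter_subset _ _)
      refine ⟨T, hTA, hTcard, insert z Y', ?_, ?_⟩
      · intro v hv
        have hzfv : z ∈ f v := (Finset.mem_filter.1 (hTB hv)).2
        exact Finset.insert_subset hzfv ((hY'sub v hv).trans (Finset.erase_subset _ _))
      · intro u hu v hv huv
        have key : ∀ w, f w \ insert z Y' = (f w).erase z \ Y' := by
          intro w
          ext a
          simp only [Finset.mem_sdiff, Finset.mem_erase, Finset.mem_insert]
          tauto
        rw [key, key]
        exact hY'disj u hu v hv huv
    · intro v hv
      rw [hB, Finset.mem_filter] at hv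
      rw [Finset.card_erase_of_mem hv.2]
      have := hc v hv.1
      omega

lemma sunflowers_extract {V W : Type*} [DecidableEq V] [DecidableEq W] (s m : ℕ) (hm : 1 ≤ m)
    (f : V → Finset W) :
    ∀ A : Finset V, (∀ v ∈ A, (f v).card ≤ s) →
    ∃ 𝒢 : Finset (Finset V),
      (∀ T ∈ 𝒢, T ⊆ A ∧ T.card = m ∧ ∃ Y : Finset W, (∀ v ∈ T, Y ⊆ f v) ∧
        ∀ u ∈ T, ∀ v ∈ T, u ≠ v → Disjoint (f u \ Y) (f v \ Y)) ∧
      (∀ T ∈ 𝒢, ∀ T' ∈ 𝒢, T ≠ T' → Disjoint T T') ∧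
      A.card ≤ m * 𝒢.card + (s+1).factorial * m ^ (s+1) := by
  intro A
  induction A using Finset.strongInduction with
  | _ A ih =>
    intro hcard
    by_cases hsmall : A.card < (s+1).factorial * m ^ (s+1)
    · exact ⟨∅, by simp, by simp, by simp; omega⟩
    push_neg at hsmall
    obtain ⟨T, hTA, hTcard, hTsun⟩ := sunflower_exists s m A f hcard hsmall
    have hTne : T.Nonempty := by
      rw [← Finset.card_pos, hTcard]; omega
    have hssub : A \ T ⊂ A := by
      obtain ⟨x, hx⟩ := hTne
      refine Finset.ssubset_iff_of_subset Finset.sdiff_subset |>.2 ⟨x, hTA hx, ?_⟩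
      simp [hx]
    obtain ⟨𝒢', h𝒢'prop, h𝒢'disj, h𝒢'card⟩ := ih _ hssub
      (fun v hv => hcard v (Finset.mem_sdiff.1 hv).1)
    have hT𝒢' : T ∉ 𝒢' := by
      intro hmem
      obtain ⟨x, hx⟩ := hTne
      have := (h𝒢'prop T hmem).1 hx
      rw [Finset.mem_sdiff] at this
      exact this.2 hx
    refine ⟨insert T 𝒢', ?_, ?_, ?_⟩
    · intro T' hT'
      rcases Finset.mem_insert.1 hT' with rfl | hT'
      · exact ⟨hTA, hTcard, hTsun⟩
      · obtain ⟨h1, h2, h3⟩ := h𝒢'prop T' hT'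
        exact ⟨h1.trans Finset.sdiff_subset, h2, h3⟩
    · intro T1 hT1 T2 hT2 hne
      have haux : ∀ T' ∈ 𝒢', Disjoint T T' := by
        intro T' hT'
        rw [Finset.disjoint_left]
        intro a haT haT'
        have := (h𝒢'prop T' hT').1 haT'
        rw [Finset.mem_sdiff] at this
        exact this.2 haT
      rcases Finset.mem_insert.1 hT1 with h1 | h1 <;> rcases Finset.mem_insert.1 hT2 with h2 | h2
      · exact absurd (h1.trans h2.symm) hne
      · subst h1; exact haux T2 h2
      · subst h2; exact (haux T1 h1).symm
      · exact h𝒢'disj T1 h1 T2 h2 hne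
    · rw [Finset.card_insert_of_notMem hT𝒢']
      have h1 : (A \ T).card = A.card - m := by
        rw [Finset.card_sdiff_of_subset hTA, hTcard]
      have hmA : m ≤ A.card := by
        calc m ≤ m ^ (s+1) := Nat.le_self_pow (by omega) m
          _ ≤ (s+1).factorial * m ^ (s+1) := Nat.le_mul_of_pos_left _ (Nat.factorial_pos _)
          _ ≤ A.card := hsmall
      have := h𝒢'card
      rw [h1] at this
      have hexpand : m * (𝒢'.card + 1) = m * 𝒢'.card + m := by ring
      omega

end Sunflower

section Pairs

variable {V : Type*} [DecidableEq V]

def req (nb : V → Finset V) (p : V × V) : Finset (Sym2 V) :=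
  ((nb p.1 \ nb p.2).image fun a => s(p.2, a)) ∪ ((nb p.2 \ nb p.1).image fun b => s(p.1, b))

lemma req_card_le (nb : V → Finset V) (p : V × V) :
    (req nb p).card ≤ (nb p.1).card + (nb p.2).card := by
  calc (req nb p).card ≤ ((nb p.1 \ nb p.2).image fun a => s(p.2, a)).card
        + ((nb p.2 \ nb p.1).image fun b => s(p.1, b)).card := Finset.card_union_le _ _
    _ ≤ (nb p.1 \ nb p.2).card + (nb p.2 \ nb p.1).card :=
        Nat.add_le_add (Finset.card_image_le) (Finset.card_image_le)
    _ ≤ (nb p.1).card + (nb p.2).card :=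
        Nat.add_le_add (Finset.card_le_card (Finset.sdiff_subset))
          (Finset.card_le_card (Finset.sdiff_subset))

lemma req_rep (nb : V → Finset V) (B : Finset V)
    (hirr : ∀ x, x ∉ nb x)
    (hind : ∀ u ∈ B, ∀ v ∈ B, u ≠ v → v ∉ nb u)
    (r : V × V) (h1 : r.1 ∈ B) (h2 : r.2 ∈ B) :
    ∀ e ∈ req nb r, ∃ w z, e = s(w, z) ∧
      ((w = r.2 ∧ z ∈ nb r.1 \ nb r.2) ∨ (w = r.1 ∧ z ∈ nb r.2 \ nb r.1)) ∧ z ∉ B := by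
  intro e he
  have hout : ∀ z, z ∈ nb r.1 ∪ nb r.2 → z ∉ B := by
    intro z hz hzB
    rcases Finset.mem_union.1 hz with h | h
    · have hzne : z ≠ r.1 := fun hzz => hirr r.1 (hzz ▸ h)
      exact hind r.1 h1 z hzB (Ne.symm hzne) h
    · have hzne : z ≠ r.2 := fun hzz => hirr r.2 (hzz ▸ h)
      exact hind r.2 h2 z hzB (Ne.symm hzne) h
  rcases Finset.mem_union.1 he with h | h
  · obtain ⟨a, ha, rfl⟩ := Finset.mem_image.1 h
    exact ⟨r.2, a, rfl, Or.inl ⟨rfl, ha⟩,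
      hout a (Finset.mem_union.2 (Or.inl (Finset.mem_sdiff.1 ha).1))⟩
  · obtain ⟨b, hb, rfl⟩ := Finset.mem_image.1 h
    exact ⟨r.1, b, rfl, Or.inr ⟨rfl, hb⟩,
      hout b (Finset.mem_union.2 (Or.inr (Finset.mem_sdiff.1 hb).1))⟩

lemma req_disjoint [LinearOrder V] (nb : V → Finset V) (B : Finset V)
    (hirr : ∀ x, x ∉ nb x)
    (hind : ∀ u ∈ B, ∀ v ∈ B, u ≠ v → v ∉ nb u)
    (𝒢 : Finset (Finset V))
    (hprop : ∀ T ∈ 𝒢, T ⊆ B ∧ ∃ Y : Finset V, (∀ v ∈ T, Y ⊆ nb v) ∧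
      ∀ u ∈ T, ∀ v ∈ T, u ≠ v → Disjoint (nb u \ Y) (nb v \ Y))
    (hgdisj : ∀ T ∈ 𝒢, ∀ T' ∈ 𝒢, T ≠ T' → Disjoint T T') :
    ∀ p ∈ 𝒢.biUnion (fun T => T.offDiag.filter fun q => q.1 < q.2),
    ∀ q ∈ 𝒢.biUnion (fun T => T.offDiag.filter fun q => q.1 < q.2),
    p ≠ q → Disjoint (req nb p) (req nb q) := by
  intro p hp q hq hne
  simp only [Finset.mem_biUnion, Finset.mem_filter, Finset.mem_offDiag] at hp hq
  obtain ⟨T, hT, ⟨hp1, hp2, hpne⟩, hplt⟩ := hp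
  obtain ⟨T', hT', ⟨hq1, hq2, hqne⟩, hqlt⟩ := hq
  have hTB := (hprop T hT).1
  have hT'B := (hprop T' hT').1
  rw [Finset.disjoint_left]
  intro e hep heq
  obtain ⟨w, z, hewz, hcase, hzB⟩ :=
    req_rep nb B hirr hind p (hTB hp1) (hTB hp2) e hep
  obtain ⟨w', z', hewz', hcase', hz'B⟩ :=
    req_rep nb B hirr hind q (hT'B hq1) (hT'B hq2) e heq
  -- match endpoints
  have hwB : w ∈ B := by
    rcases hcase with ⟨rfl, _⟩ | ⟨rfl, _⟩
    · exact hTB hp2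
    · exact hTB hp1
  have hw'B : w' ∈ B := by
    rcases hcase' with ⟨rfl, _⟩ | ⟨rfl, _⟩
    · exact hT'B hq2
    · exact hT'B hq1
  have heq2 : w = w' ∧ z = z' := by
    rw [hewz] at hewz'
    rcases Sym2.eq_iff.1 hewz' with ⟨h1, h2⟩ | ⟨h1, h2⟩
    · exact ⟨h1, h2⟩
    · exact absurd (h1 ▸ hwB) hz'B
  obtain ⟨rfl, rfl⟩ := heq2
  -- w is in both groups
  have hwT : w ∈ T := by
    rcases hcase with ⟨rfl, _⟩ | ⟨rfl, _⟩
    · exact hp2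
    · exact hp1
  have hwT' : w ∈ T' := by
    rcases hcase' with ⟨rfl, _⟩ | ⟨rfl, _⟩
    · exact hq2
    · exact hq1
  have hTT' : T = T' := by
    by_contra hTne
    exact Finset.disjoint_left.1 (hgdisj T hT T' hT' hTne) hwT hwT'
  subst hTT'
  obtain ⟨Y, hYsub, hYdisj⟩ := (hprop T hT).2
  -- in each case, derive contradiction from petal disjointness
  have petal : ∀ x ∈ T, ∀ x' ∈ T, x ≠ x' → ∀ c ∈ T, z ∈ nb x → z ∉ nb c →
      z ∈ nb x' → False := by
    intro x hx x' hx' hxx' c hc hz1 hz2 hz3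
    have hzY : z ∉ Y := fun hzY => hz2 (hYsub c hc hzY)
    exact Finset.disjoint_left.1 (hYdisj x hx x' hx' hxx')
      (Finset.mem_sdiff.2 ⟨hz1, hzY⟩) (Finset.mem_sdiff.2 ⟨hz3, hzY⟩)
  rcases hcase with ⟨hw, hz⟩ | ⟨hw, hz⟩ <;> rcases hcase' with ⟨hw', hz'⟩ | ⟨hw', hz'⟩ <;>
    rw [Finset.mem_sdiff] at hz hz'
  · -- w = p.2 = q.2
    have hne1 : p.1 ≠ q.1 := by
      intro h
      exact hne (Prod.ext h (hw.symm.trans hw'))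
    exact petal p.1 hp1 q.1 hq1 hne1 p.2 hp2 hz.1 hz.2 hz'.1
  · -- w = p.2 = q.1
    have hne1 : p.1 ≠ q.2 := by
      have : p.1 < q.2 := lt_trans (hw' ▸ hw ▸ hplt) hqlt
      exact ne_of_lt this
    exact petal p.1 hp1 q.2 hq2 hne1 p.2 hp2 hz.1 hz.2 hz'.1
  · -- w = p.1 = q.2
    have hne1 : p.2 ≠ q.1 := by
      have : q.1 < p.2 := lt_trans (hw ▸ hw' ▸ hqlt) hplt
      exact (ne_of_lt this).symm
    exact petal p.2 hp2 q.1 hq1 hne1 p.1 hp1 hz.1 hz.2 hz'.1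
  · -- w = p.1 = q.1
    have hne1 : p.2 ≠ q.2 := by
      intro h
      exact hne (Prod.ext (hw.symm.trans hw') h)
    exact petal p.2 hp2 q.2 hq2 hne1 p.1 hp1 hz.1 hz.2 hz'.1

lemma card_ltPairs {α : Type*} [LinearOrder α] [DecidableEq α] (T : Finset α) :
    (T.offDiag.filter fun p => p.1 < p.2).card * 2 + T.card = T.card * T.card := by
  classical
  have hsplit : (T.offDiag.filter fun p => p.1 < p.2).card
      + (T.offDiag.filter fun p => ¬ p.1 < p.2).card = T.offDiag.card :=
    Finset.card_filter_add_card_filter_not _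
  have hswap : (T.offDiag.filter fun p => ¬ p.1 < p.2).card
      = (T.offDiag.filter fun p => p.1 < p.2).card := by
    apply Finset.card_bij (fun p _ => (p.2, p.1))
    · rintro ⟨a, b⟩ hp
      simp only [Finset.mem_filter, Finset.mem_offDiag] at hp ⊢
      obtain ⟨⟨ha, hb, hab⟩, hlt⟩ := hp
      exact ⟨⟨hb, ha, Ne.symm hab⟩, lt_of_le_of_ne (not_lt.1 hlt) (Ne.symm hab)⟩
    · rintro ⟨a, b⟩ hp ⟨c, d⟩ hq h
      simp only [Prod.mk.injEq] at h ⊢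
      exact ⟨h.2, h.1⟩
    · rintro ⟨a, b⟩ hq
      simp only [Finset.mem_filter, Finset.mem_offDiag] at hq
      obtain ⟨⟨ha, hb, hab⟩, hlt⟩ := hq
      refine ⟨(b, a), ?_, rfl⟩
      simp only [Finset.mem_filter, Finset.mem_offDiag]
      exact ⟨⟨hb, ha, Ne.symm hab⟩, not_lt.2 (le_of_lt hlt)⟩
  have hoff : T.offDiag.card = T.card * T.card - T.card := Finset.offDiag_card T
  have hle : T.card ≤ T.card * T.card := by
    rcases Nat.eq_zero_or_pos T.card with h | h
    · simp [h]
    · exact Nat.le_mul_of_pos_left _ h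
  revert hsplit hswap hoff hle
  generalize (T.offDiag.filter fun p => p.1 < p.2).card = u
  generalize (T.offDiag.filter fun p => ¬ p.1 < p.2).card = w
  generalize T.offDiag.card = od
  generalize T.card * T.card = sq
  intro h1 h2 h3 h4
  omega

end Pairs

section Asymptotics

open Filter

lemma eventually_thr (s c₁ : ℕ) :
    ∀ᶠ (n : ℕ) in Filter.atTop,
      (((s+1).factorial * (c₁ * (⌈Real.log n⌉₊ + 1)) ^ (s+1) : ℕ) : ℝ) ≤ (n:ℝ) / (4*(s+1))
      ∧ 1 ≤ Real.log n := by
  have hKpos : (0:ℝ) < ((s+1).factorial : ℝ) * (3*c₁+3)^(s+1) := by positivity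
  set K : ℝ := ((s+1).factorial : ℝ) * (3*c₁+3)^(s+1) with hK
  set ε : ℝ := (4*(s+1) * K)⁻¹ with hε
  have hεpos : 0 < ε := by
    rw [hε]
    positivity
  have htend := Real.tendsto_pow_log_div_mul_add_atTop 1 0 (s+1) one_ne_zero
  have hev1 : ∀ᶠ x : ℝ in Filter.atTop, Real.log x ^ (s+1) / (1*x+0) < ε :=
    htend.eventually_lt_const hεpos
  have hev2 : ∀ᶠ x : ℝ in Filter.atTop, 1 ≤ Real.log x :=
    Real.tendsto_log_atTop.eventually_ge_atTop 1
  have hev3 : ∀ᶠ x : ℝ in Filter.atTop, (1:ℝ) ≤ x := Filter.eventually_ge_atTop 1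
  have hevN := (tendsto_natCast_atTop_atTop (R := ℝ)).eventually
    (hev1.and (hev2.and hev3))
  filter_upwards [hevN] with n hn
  obtain ⟨h1, h2, h3⟩ := hn
  refine ⟨?_, h2⟩
  have hnpos : (0:ℝ) < n := lt_of_lt_of_le zero_lt_one h3
  rw [one_mul, add_zero, div_lt_iff₀ hnpos] at h1
  have hlogpos : (0:ℝ) ≤ Real.log n := le_trans zero_le_one h2
  have hceil : ((⌈Real.log n⌉₊ : ℝ) + 1) ≤ Real.log n + 2 := by
    have := Nat.ceil_lt_add_one hlogpos
    linarith
  have hc1 : (0:ℝ) ≤ (c₁ : ℝ) := Nat.cast_nonneg _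
  have hlam : ((c₁ * (⌈Real.log n⌉₊ + 1) : ℕ) : ℝ) ≤ (3*(c₁:ℝ)+3) * Real.log n := by
    push_cast
    have h4 : (⌈Real.log n⌉₊ : ℝ) + 1 ≤ 3 * Real.log n := by linarith
    nlinarith
  have hlamn : (0:ℝ) ≤ ((c₁ * (⌈Real.log n⌉₊ + 1) : ℕ) : ℝ) := Nat.cast_nonneg _
  have hmain : (((s+1).factorial : ℝ)) * (((c₁ * (⌈Real.log n⌉₊ + 1) : ℕ) : ℝ)) ^ (s+1)
      ≤ K * Real.log n ^ (s+1) := by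
    have hpow : (((c₁ * (⌈Real.log n⌉₊ + 1) : ℕ) : ℝ)) ^ (s+1)
        ≤ ((3*(c₁:ℝ)+3) * Real.log n) ^ (s+1) := pow_le_pow_left₀ hlamn hlam _
    calc (((s+1).factorial : ℝ)) * (((c₁ * (⌈Real.log n⌉₊ + 1) : ℕ) : ℝ)) ^ (s+1)
        ≤ (((s+1).factorial : ℝ)) * ((3*(c₁:ℝ)+3) * Real.log n) ^ (s+1) :=
          mul_le_mul_of_nonneg_left hpow (Nat.cast_nonneg _)
      _ = K * Real.log n ^ (s+1) := by
          rw [hK, mul_pow]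
          push_cast
          ring
  have hKε : K * ε = (4*((s:ℝ)+1))⁻¹ := by
    rw [hε]
    have hKne : K ≠ 0 := ne_of_gt hKpos
    have hs1 : (0:ℝ) < 4*((s:ℝ)+1) := by positivity
    field_simp
  have hchain : (((s+1).factorial : ℝ)) * (((c₁ * (⌈Real.log n⌉₊ + 1) : ℕ) : ℝ)) ^ (s+1)
      ≤ (n:ℝ) / (4*((s:ℝ)+1)) := by
    have hKnn : (0:ℝ) ≤ K := le_of_lt hKpos
    calc (((s+1).factorial : ℝ)) * (((c₁ * (⌈Real.log n⌉₊ + 1) : ℕ) : ℝ)) ^ (s+1)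
        ≤ K * Real.log n ^ (s+1) := hmain
      _ ≤ K * (ε * n) := mul_le_mul_of_nonneg_left (le_of_lt h1) hKnn
      _ = (K * ε) * n := by ring
      _ = (n:ℝ) / (4*((s:ℝ)+1)) := by rw [hKε]; field_simp
  calc (((s+1).factorial * (c₁ * (⌈Real.log n⌉₊ + 1)) ^ (s+1) : ℕ) : ℝ)
      = (((s+1).factorial : ℝ)) * (((c₁ * (⌈Real.log n⌉₊ + 1) : ℕ) : ℝ)) ^ (s+1) := by
        push_cast
        ring
    _ ≤ (n:ℝ) / (4*((s:ℝ)+1)) := hchain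
    _ = (n:ℝ) / (4*(↑s+1)) := by norm_num

end Asymptotics

/-- If `F` has at most `Cn` edges, then for `G ∼ G(n,1/2)` and any fixed bijection `π`, with
probability at least `1 - e^(-n log n)` there is a pair of distinct vertices of `G` forming a
`π`-switch. -/
theorem switch_exists_whp (C : ℝ) (hC : 1 ≤ C) :
    ∃ n₀ : ℕ, ∀ n ≥ n₀, ∀ F : SimpleGraph (Fin n),
      (F.edgeSet.ncard : ℝ) ≤ C * n →
      ∀ π : Fin n ≃ Fin n,
        1 - Real.exp (-(n * Real.log n)) ≤
          (Nat.card {G : SimpleGraph (Fin n) //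
              ∃ x y : Fin n, IsSwitch F G π x y} : ℝ) / (2 : ℝ) ^ (n.choose 2) := by
  classical
  set s : ℕ := ⌈4 * C⌉₊ with hs
  have hsC : 4 * C ≤ (s:ℝ) := Nat.le_ceil _
  have hs4 : 4 ≤ s := by
    have h4 : (4:ℝ) ≤ 4 * C := by linarith
    calc 4 = ⌈(4:ℝ)⌉₊ := by norm_num
      _ ≤ s := Nat.ceil_le_ceil h4
  set c₁ : ℕ := (s+1) * 4^(s+2) with hc₁
  obtain ⟨n₀, hn₀⟩ := Filter.eventually_atTop.1 (eventually_thr s c₁)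
  refine ⟨max n₀ 2, ?_⟩
  intro n hn F hF π
  have hn₀n : n₀ ≤ n := le_trans (le_max_left _ _) hn
  have hn2 : 2 ≤ n := le_trans (le_max_right _ _) hn
  obtain ⟨hthr, hlog1⟩ := hn₀ n hn₀n
  have hnpos : (0:ℝ) < n := by
    have : (2:ℝ) ≤ n := by exact_mod_cast hn2
    linarith
  letI : DecidableRel F.Adj := fun a b => Classical.propDecidable _
  -- the conjugated neighbourhood function
  set nb : Fin n → Finset (Fin n) :=
    fun x => (F.neighborFinset (π.symm x)).image π with hnb
  have mem_nb : ∀ x z, z ∈ nb x ↔ F.Adj (π.symm x) (π.symm z) := by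
    intro x z
    simp only [hnb, Finset.mem_image, SimpleGraph.mem_neighborFinset]
    constructor
    · rintro ⟨w, hw, rfl⟩
      simpa using hw
    · intro h
      exact ⟨π.symm z, h, by simp⟩
  have hirr : ∀ x, x ∉ nb x := fun x hx => F.loopless.irrefl _ ((mem_nb x x).1 hx)
  have hsymm : ∀ x z, z ∈ nb x → x ∈ nb z :=
    fun x z h => (mem_nb z x).2 (((mem_nb x z).1 h).symm)
  have hnbcard : ∀ x, (nb x).card = F.degree (π.symm x) := by
    intro x
    rw [hnb]
    rw [Finset.card_image_of_injective _ π.injective]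
    rfl
  -- edge count: sum of degrees
  have hsum : ∑ x : Fin n, ((nb x).card : ℝ) ≤ 2 * C * n := by
    have h1 : ∑ x : Fin n, (nb x).card = ∑ v : Fin n, F.degree v := by
      calc ∑ x : Fin n, (nb x).card = ∑ x : Fin n, F.degree (π.symm x) := by
            exact Finset.sum_congr rfl fun x _ => hnbcard x
        _ = ∑ v : Fin n, F.degree v := Fintype.sum_equiv π.symm _ _ (fun x => rfl)
    have h2 : ∑ v : Fin n, F.degree v = 2 * F.edgeFinset.card :=
      SimpleGraph.sum_degrees_eq_twice_card_edges F
    have h3 : (F.edgeFinset.card : ℝ) ≤ C * n := by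
      have he : F.edgeFinset.card = F.edgeSet.ncard := by
        rw [SimpleGraph.edgeFinset_card, ← Nat.card_eq_fintype_card, Nat.card_coe_set_eq]
      rw [he]
      exact hF
    calc ∑ x : Fin n, ((nb x).card : ℝ) = ((∑ x : Fin n, (nb x).card : ℕ) : ℝ) := by
          push_cast; ring
      _ = ((2 * F.edgeFinset.card : ℕ) : ℝ) := by rw [h1, h2]
      _ = 2 * (F.edgeFinset.card : ℝ) := by push_cast; ring
      _ ≤ 2 * (C * n) := by linarith
      _ = 2 * C * n := by ring
  -- low degree vertices
  set L := Finset.univ.filter (fun x : Fin n => (nb x).card ≤ s) with hL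
  have hLcard : (n:ℝ) ≤ 2 * L.card := by
    set H := Finset.univ.filter (fun x : Fin n => ¬ (nb x).card ≤ s) with hH
    have hLH : L.card + H.card = n := by
      rw [hL, hH]
      rw [Finset.card_filter_add_card_filter_not]
      simp
    have hHsum : H.card * (s+1) ≤ ∑ x ∈ H, (nb x).card := by
      have := Finset.card_nsmul_le_sum H (fun x => (nb x).card) (s+1) ?_
      · simpa [smul_eq_mul, mul_comm] using this
      · intro x hx
        rw [hH, Finset.mem_filter] at hx
        exact Nat.not_le.mp hx.2
    have hHsum2 : ∑ x ∈ H, (nb x).card ≤ ∑ x : Fin n, (nb x).card :=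
      Finset.sum_le_sum_of_subset (Finset.subset_univ _)
    have hHreal : (H.card : ℝ) * ((s:ℝ)+1) ≤ 2 * C * n := by
      calc (H.card : ℝ) * ((s:ℝ)+1) = ((H.card * (s+1) : ℕ) : ℝ) := by push_cast; ring
        _ ≤ ((∑ x ∈ H, (nb x).card : ℕ) : ℝ) := by exact_mod_cast hHsum
        _ ≤ ∑ x : Fin n, ((nb x).card : ℝ) := by
            rw [← Nat.cast_sum]
            exact_mod_cast hHsum2
        _ ≤ 2 * C * n := hsum
    -- (s+1) ≥ 4C, so H.card ≤ n/2
    have hCpos : (0:ℝ) < C := by linarith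
    have hHle : (H.card : ℝ) ≤ (n:ℝ) / 2 := by
      have h4C : 4 * C ≤ (s:ℝ) + 1 := by linarith
      have hHnn : (0:ℝ) ≤ (H.card : ℝ) := Nat.cast_nonneg _
      have : (H.card : ℝ) * (4 * C) ≤ 2 * C * n := by
        calc (H.card : ℝ) * (4 * C) ≤ (H.card : ℝ) * ((s:ℝ)+1) :=
              mul_le_mul_of_nonneg_left h4C hHnn
          _ ≤ 2 * C * n := hHreal
      nlinarith
    have : (L.card : ℝ) + (H.card : ℝ) = n := by exact_mod_cast hLH
    linarith
  -- independent subset of low-degree vertices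
  obtain ⟨B, hBL, hBcard, hBind⟩ := indep_subset nb s hsymm L
    (fun v hv => (Finset.mem_filter.1 hv).2)
  have hBlow : ∀ v ∈ B, (nb v).card ≤ s :=
    fun v hv => (Finset.mem_filter.1 (hBL hv)).2
  -- sunflower decomposition
  set lam : ℕ := ⌈Real.log n⌉₊ + 1 with hlam
  set m : ℕ := c₁ * lam with hm
  have hc₁4 : 4 ≤ c₁ := by
    rw [hc₁]
    calc 4 ≤ 4^(s+2) := Nat.le_self_pow (by omega) 4
      _ ≤ (s+1) * 4^(s+2) := Nat.le_mul_of_pos_left _ (by omega)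
  have hm2 : 2 ≤ m := by
    rw [hm]
    calc 2 ≤ c₁ := by omega
      _ = c₁ * 1 := (mul_one _).symm
      _ ≤ c₁ * lam := Nat.mul_le_mul_left _ (by omega)
  obtain ⟨𝒢, h𝒢prop, h𝒢disj, h𝒢card⟩ := sunflowers_extract s m (by omega) nb B hBlow
  -- the pair family
  set I := 𝒢.biUnion (fun T => T.offDiag.filter fun q => q.1 < q.2) with hI
  have hpairsdisj : ∀ T ∈ 𝒢, ∀ T' ∈ 𝒢, T ≠ T' →
      Disjoint (T.offDiag.filter fun q => q.1 < q.2)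
        (T'.offDiag.filter fun q => q.1 < q.2) := by
    intro T hT T' hT' hne
    rw [Finset.disjoint_left]
    intro p hp hp'
    rw [Finset.mem_filter, Finset.mem_offDiag] at hp hp'
    exact Finset.disjoint_left.1 (h𝒢disj T hT T' hT' hne) hp.1.1 hp'.1.1
  have hImem : ∀ p ∈ I, ∃ T ∈ 𝒢, p.1 ∈ T ∧ p.2 ∈ T ∧ p.1 < p.2 := by
    intro p hp
    rw [hI, Finset.mem_biUnion] at hp
    obtain ⟨T, hT, hpT⟩ := hp
    rw [Finset.mem_filter, Finset.mem_offDiag] at hpT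
    exact ⟨T, hT, hpT.1.1, hpT.1.2.1, hpT.2⟩
  have hIcard : I.card * 2 + 𝒢.card * m = 𝒢.card * (m * m) := by
    have hIeq : I.card = ∑ T ∈ 𝒢, ((T.offDiag.filter fun q => q.1 < q.2)).card := by
      rw [hI]
      exact Finset.card_biUnion hpairsdisj
    have hper : ∀ T ∈ 𝒢, ((T.offDiag.filter fun q => q.1 < q.2)).card * 2 + m = m * m := by
      intro T hT
      have := card_ltPairs T
      rw [(h𝒢prop T hT).2.1] at this
      exact this
    calc I.card * 2 + 𝒢.card * m
        = (∑ T ∈ 𝒢, ((T.offDiag.filter fun q => q.1 < q.2)).card) * 2 + 𝒢.card * m := by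
          rw [hIeq]
      _ = ∑ T ∈ 𝒢, (((T.offDiag.filter fun q => q.1 < q.2)).card * 2) + ∑ T ∈ 𝒢, m := by
          rw [Finset.sum_mul, Finset.sum_const, smul_eq_mul]
      _ = ∑ T ∈ 𝒢, (((T.offDiag.filter fun q => q.1 < q.2)).card * 2 + m) := by
          rw [Finset.sum_add_distrib]
      _ = ∑ T ∈ 𝒢, m * m := Finset.sum_congr rfl hper
      _ = 𝒢.card * (m * m) := by rw [Finset.sum_const, smul_eq_mul]
  -- the slot sets
  set S : Fin n × Fin n → Finset (ESlot n) :=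
    fun p => (req nb p).subtype (fun e => ¬ e.IsDiag) with hS
  have hSmem : ∀ p (e : ESlot n), e ∈ S p ↔ e.1 ∈ req nb p := by
    intro p e
    rw [hS]
    simp [Finset.mem_subtype]
  have hScard : ∀ p ∈ I, (S p).card ≤ 2 * s := by
    intro p hp
    obtain ⟨T, hT, hp1, hp2, _⟩ := hImem p hp
    have hTB := (h𝒢prop T hT).1
    have h1 : (S p).card ≤ (req nb p).card := by
      rw [hS]
      rw [Finset.card_subtype]
      exact Finset.card_filter_le _ _
    calc (S p).card ≤ (req nb p).card := h1
      _ ≤ (nb p.1).card + (nb p.2).card := req_card_le nb p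
      _ ≤ s + s := Nat.add_le_add (hBlow _ (hTB hp1)) (hBlow _ (hTB hp2))
      _ = 2 * s := by ring
  have hSdisj : ((I : Set (Fin n × Fin n))).Pairwise fun p q => Disjoint (S p) (S q) := by
    intro p hp q hq hne
    have hreq := req_disjoint nb B hirr hBind 𝒢
      (fun T hT => ⟨(h𝒢prop T hT).1, (h𝒢prop T hT).2.2⟩) h𝒢disj
      p (by rwa [← hI, ← Finset.mem_coe]) q (by rwa [← hI, ← Finset.mem_coe]) hne
    rw [Finset.disjoint_left]
    intro e hep heq
    exact Finset.disjoint_left.1 hreq ((hSmem p e).1 hep) ((hSmem q e).1 heq)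
  -- bad graphs inject into bad boolean functions
  have hbadinj : Nat.card {G : SimpleGraph (Fin n) // ¬ ∃ x y, IsSwitch F G π x y}
      ≤ Nat.card {h : ESlot n → Bool // ∀ p ∈ I, ∃ e ∈ S p, h e = false} := by
    apply Nat.card_le_card_of_injective
      (f := fun Gb => (⟨graphToFun Gb.1, ?_⟩ :
        {h : ESlot n → Bool // ∀ p ∈ I, ∃ e ∈ S p, h e = false}))
    · intro G1 G2 hG
      have h1 : graphToFun G1.1 = graphToFun G2.1 := congrArg Subtype.val hG
      exact Subtype.ext ((graphEquiv n).injective h1)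
    · intro p hp
      by_contra hcon
      push_neg at hcon
      simp only [Bool.not_eq_false] at hcon
      obtain ⟨T, hT, hp1T, hp2T, hplt⟩ := hImem p hp
      have hTB := (h𝒢prop T hT).1
      have hp1B : p.1 ∈ B := hTB hp1T
      have hp2B : p.2 ∈ B := hTB hp2T
      apply Gb.2
      refine ⟨p.1, p.2, ne_of_lt hplt, ?_, ?_⟩
      · intro w hw
        obtain ⟨z, hz, rfl⟩ := hw
        have hw1 : π z ∈ nb p.1 := (mem_nb _ _).2 (by simpa using hz.1)
        have hw2 : π z ∉ nb p.2 := fun hmem => hz.2 (by simpa using (mem_nb _ _).1 hmem)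
        have hwz : π z ∈ nb p.1 \ nb p.2 := Finset.mem_sdiff.2 ⟨hw1, hw2⟩
        have hwne : p.2 ≠ π z := by
          intro heq
          rw [← heq] at hw1
          exact hBind p.1 hp1B p.2 hp2B (ne_of_lt hplt) hw1
        have hediag : ¬ (s(p.2, π z) : Sym2 (Fin n)).IsDiag := by
          simpa [Sym2.isDiag_iff_proj_eq] using hwne
        have hein : (⟨s(p.2, π z), hediag⟩ : ESlot n) ∈ S p := by
          rw [hSmem]
          apply Finset.mem_union_left
          exact Finset.mem_image.2 ⟨π z, hwz, rfl⟩
        have htrue := hcon _ hein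
        rw [graphToFun_true_iff] at htrue
        rw [SimpleGraph.mem_edgeSet] at htrue
        exact htrue
      · intro w hw
        obtain ⟨z, hz, rfl⟩ := hw
        have hw1 : π z ∈ nb p.2 := (mem_nb _ _).2 (by simpa using hz.1)
        have hw2 : π z ∉ nb p.1 := fun hmem => hz.2 (by simpa using (mem_nb _ _).1 hmem)
        have hwz : π z ∈ nb p.2 \ nb p.1 := Finset.mem_sdiff.2 ⟨hw1, hw2⟩
        have hwne : p.1 ≠ π z := by
          intro heq
          rw [← heq] at hw1
          exact hBind p.2 hp2B p.1 hp1B (ne_of_lt hplt).symm hw1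
        have hediag : ¬ (s(p.1, π z) : Sym2 (Fin n)).IsDiag := by
          simpa [Sym2.isDiag_iff_proj_eq] using hwne
        have hein : (⟨s(p.1, π z), hediag⟩ : ESlot n) ∈ S p := by
          rw [hSmem]
          apply Finset.mem_union_right
          exact Finset.mem_image.2 ⟨π z, hwz, rfl⟩
        have htrue := hcon _ hein
        rw [graphToFun_true_iff] at htrue
        rw [SimpleGraph.mem_edgeSet] at htrue
        exact htrue
  have hbound := card_bad_le I S hSdisj
  rw [card_eslot] at hbound
  -- per-pair probability bound
  have hprodle : ∏ p ∈ I, (1 - ((2:ℝ)⁻¹) ^ (S p).card)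
      ≤ (1 - ((2:ℝ)⁻¹) ^ (2*s)) ^ I.card := by
    rw [← Finset.prod_const]
    apply Finset.prod_le_prod
    · intro p hp
      have : ((2:ℝ)⁻¹) ^ (S p).card ≤ 1 := pow_le_one₀ (by norm_num) (by norm_num)
      linarith
    · intro p hp
      have : ((2:ℝ)⁻¹) ^ (2*s) ≤ ((2:ℝ)⁻¹) ^ (S p).card :=
        pow_le_pow_of_le_one (by norm_num) (by norm_num) (hScard p hp)
      linarith
  
  -- numeric endgame
  set t : ℝ := ((2:ℝ)⁻¹) ^ (2*s) with htdef
  have htpos : 0 < t := by rw [htdef]; positivity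
  have ht1 : t ≤ 1 := by
    rw [htdef]
    exact pow_le_one₀ (by norm_num) (by norm_num)
  have ht4 : t * (4:ℝ)^s = 1 := by
    have h24 : ((2:ℝ)⁻¹)^2 = (4:ℝ)⁻¹ := by norm_num
    rw [htdef, pow_mul, h24, ← mul_pow]
    norm_num
  have hlogn0 : (0:ℝ) ≤ Real.log n := le_trans zero_le_one hlog1
  have hIlb : (4:ℝ)^s * ((n:ℝ) * Real.log n) ≤ (I.card : ℝ) := by
    have hF1 : (I.card : ℝ) * 2 = ((𝒢.card : ℝ) * m) * ((m:ℝ) - 1) := by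
      have hcst := congrArg (fun k : ℕ => (k:ℝ)) hIcard
      push_cast at hcst
      linear_combination hcst
    have h4s : (0:ℝ) < 4*((s:ℝ)+1) := by positivity
    have hgm : (n:ℝ) / (4*((s:ℝ)+1)) ≤ (𝒢.card : ℝ) * m := by
      rw [div_le_iff₀ h4s]
      have hcast : (B.card : ℝ) ≤ (m:ℝ) * 𝒢.card + (((s+1).factorial * m ^ (s+1) : ℕ) : ℝ) := by
        exact_mod_cast h𝒢card
      have hBc : (L.card : ℝ) ≤ ((s:ℝ)+1) * B.card := by exact_mod_cast hBcard
      have hthr' : (((s+1).factorial * m ^ (s+1) : ℕ) : ℝ) * (4*((s:ℝ)+1)) ≤ n :=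
        (le_div_iff₀ h4s).1 hthr
      nlinarith [hcast, hBc, hLcard, hthr', Nat.cast_nonneg (α := ℝ) B.card,
        Nat.cast_nonneg (α := ℝ) L.card, Nat.cast_nonneg (α := ℝ) 𝒢.card,
        Nat.cast_nonneg (α := ℝ) m]
    have hm1 : 8*((s:ℝ)+1)*(4:ℝ)^s * Real.log n ≤ (m:ℝ) - 1 := by
      have hmcast : (m:ℝ) = ((s:ℝ)+1) * (16 * 4^s) * (lam:ℝ) := by
        rw [hm, hc₁]
        push_cast
        rw [pow_add]
        ring
      have hlamlog : Real.log n ≤ (lam:ℝ) := by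
        rw [hlam]
        push_cast
        linarith [Nat.le_ceil (Real.log n)]
      have hm2R : (2:ℝ) ≤ m := by exact_mod_cast hm2
      have h4pos : (0:ℝ) < (4:ℝ)^s := by positivity
      have hs0 : (0:ℝ) ≤ (s:ℝ) := Nat.cast_nonneg _
      nlinarith [hmcast, hlamlog, hm2R, h4pos, hs0, hlog1]
    have hb1 : (0:ℝ) ≤ 8*((s:ℝ)+1)*(4:ℝ)^s * Real.log n := by positivity
    have hb2 : (0:ℝ) ≤ (𝒢.card : ℝ) * m := le_trans (by positivity) hgm
    have hprod2 : ((n:ℝ)/(4*((s:ℝ)+1))) * (8*((s:ℝ)+1)*(4:ℝ)^s * Real.log n)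
        ≤ ((𝒢.card : ℝ) * m) * ((m:ℝ)-1) := mul_le_mul hgm hm1 hb1 hb2
    have hsimp : ((n:ℝ)/(4*((s:ℝ)+1))) * (8*((s:ℝ)+1)*(4:ℝ)^s * Real.log n)
        = 2 * 4^s * ((n:ℝ) * Real.log n) := by
      field_simp
      ring
    rw [hsimp] at hprod2
    linarith [hF1, hprod2]
  have hkey : (n:ℝ) * Real.log n ≤ t * I.card := by
    calc (n:ℝ) * Real.log n = t * ((4:ℝ)^s * ((n:ℝ)*Real.log n)) := by
          rw [← mul_assoc, ht4, one_mul]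
      _ ≤ t * I.card := mul_le_mul_of_nonneg_left hIlb (le_of_lt htpos)
  have h2Npos : (0:ℝ) < 2 ^ (n.choose 2) := by positivity
  have hbadle : (Nat.card {G : SimpleGraph (Fin n) // ¬ ∃ x y, IsSwitch F G π x y} : ℝ)
      ≤ Real.exp (-((n:ℝ) * Real.log n)) * 2 ^ (n.choose 2) := by
    have hc1 : (Nat.card {G : SimpleGraph (Fin n) // ¬ ∃ x y, IsSwitch F G π x y} : ℝ)
        ≤ (Nat.card {h : ESlot n → Bool // ∀ p ∈ I, ∃ e ∈ S p, h e = false} : ℝ) := by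
      exact_mod_cast hbadinj
    have hc3 : (1 - ((2:ℝ)⁻¹)^(2*s))^I.card ≤ Real.exp (-(t * I.card)) := by
      have hle : (1 - t) ≤ Real.exp (-t) := by
        have := Real.add_one_le_exp (-t)
        linarith
      have h0 : (0:ℝ) ≤ 1 - t := by linarith
      calc (1 - ((2:ℝ)⁻¹)^(2*s))^I.card = (1 - t)^I.card := by rw [htdef]
        _ ≤ (Real.exp (-t))^I.card := pow_le_pow_left₀ h0 hle _
        _ = Real.exp (-(t * I.card)) := by
            rw [← Real.exp_nat_mul]
            congr 1
            ring
    have hc4 : Real.exp (-(t*I.card)) ≤ Real.exp (-((n:ℝ)*Real.log n)) :=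
      Real.exp_le_exp.2 (by linarith [hkey])
    calc (Nat.card {G : SimpleGraph (Fin n) // ¬ ∃ x y, IsSwitch F G π x y} : ℝ)
        ≤ (Nat.card {h : ESlot n → Bool // ∀ p ∈ I, ∃ e ∈ S p, h e = false} : ℝ) := hc1
      _ ≤ 2 ^ (n.choose 2) * ∏ p ∈ I, (1 - ((2:ℝ)⁻¹) ^ (S p).card) := hbound
      _ ≤ 2 ^ (n.choose 2) * (1 - ((2:ℝ)⁻¹)^(2*s))^I.card :=
          mul_le_mul_of_nonneg_left hprodle (le_of_lt h2Npos)
      _ ≤ 2 ^ (n.choose 2) * Real.exp (-(t * I.card)) :=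
          mul_le_mul_of_nonneg_left hc3 (le_of_lt h2Npos)
      _ ≤ 2 ^ (n.choose 2) * Real.exp (-((n:ℝ)*Real.log n)) :=
          mul_le_mul_of_nonneg_left hc4 (le_of_lt h2Npos)
      _ = Real.exp (-((n:ℝ) * Real.log n)) * 2 ^ (n.choose 2) := by ring
  have htot : Nat.card {G : SimpleGraph (Fin n) // ∃ x y, IsSwitch F G π x y}
      + Nat.card {G : SimpleGraph (Fin n) // ¬ ∃ x y, IsSwitch F G π x y}
      = 2 ^ (n.choose 2) := by
    rw [← card_simpleGraph_eq n, ← Nat.card_sum]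
    exact Nat.card_congr (Equiv.sumCompl _)
  have hgood : (Nat.card {G : SimpleGraph (Fin n) // ∃ x y, IsSwitch F G π x y} : ℝ)
      = 2 ^ (n.choose 2)
        - (Nat.card {G : SimpleGraph (Fin n) // ¬ ∃ x y, IsSwitch F G π x y} : ℝ) := by
    have hcst := congrArg (fun k : ℕ => (k:ℝ)) htot
    push_cast at hcst
    linarith
  rw [le_div_iff₀ h2Npos]
  nlinarith [hbadle, hgood]
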